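/- For n ≥ 4, let m(j) denote the number of isomorphism classes of matroids of rank 2 on a j-element ground set, and let ρ(n) denote the number of partitions of n all of whose parts are at least 2. Then m(n) = 2·m(n−1) − m(n−2) + ρ(n). -/

import Mathlib

namespace PaperPOAM

variable {α : Type*}

/-- A circuit of a matroid: a minimal dependent set. -/
def IsCircuit (M : Matroid α) (C : Set α) : Prop :=
  M.Dep C ∧ ∀ D, D ⊂ C → ¬ M.Dep D

/-- A loop of a matroid: an element whose singleton is dependent. -/
def IsLoop (M : Matroid α) (e : α) : Prop := M.Dep {e}

/-- The set of loops of a matroid. -/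
def loops (M : Matroid α) : Set α := {e | IsLoop M e}

/-- A coloop: an element of the ground set contained in every base. -/
def IsColoop (M : Matroid α) (e : α) : Prop := e ∈ M.E ∧ ∀ B, M.IsBase B → e ∈ B

/-- A cyclic flat: a flat that is a union of circuits, i.e. a flat each of whose
elements lies in a circuit contained in the flat. -/
def IsCyclicFlat (M : Matroid α) (F : Set α) : Prop :=
  M.IsFlat F ∧ ∀ e ∈ F, ∃ C, IsCircuit M C ∧ C ⊆ F ∧ e ∈ C

/-- The rank of a set in a matroid: the largest size of an independent subset. -/
noncomputable def rkOf (M : Matroid α) (X : Set α) : ℕ :=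
  sSup {n | ∃ I, M.Indep I ∧ I ⊆ X ∧ I.ncard = n}

/-- The matroid has rank `r`: every base has `r` elements. -/
def RankEq (M : Matroid α) (r : ℕ) : Prop := ∀ B, M.IsBase B → B.ncard = r

/-- Two matroids are isomorphic: there is a bijection between the ground sets carrying
the bases of one exactly onto the bases of the other. -/
def MatroidIso (M N : Matroid α) : Prop :=
  ∃ f : α → α, Set.BijOn f M.E N.E ∧ ∀ B, B ⊆ M.E → (M.IsBase B ↔ N.IsBase (f '' B))

/-- `M` is the rank-2 Schubert matroid `S(a,b)` on `{1,…,n}`: its bases are exactly the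
two-element subsets `{i,j}` of `{1,…,n}` with `i < j`, `a ≤ i`, `b ≤ j`. -/
def IsSchubert2 (n a b : ℕ) (M : Matroid ℕ) : Prop :=
  M.E = Set.Icc 1 n ∧
  ∀ B, M.IsBase B ↔ ∃ i j, i < j ∧ a ≤ i ∧ b ≤ j ∧ 1 ≤ i ∧ j ≤ n ∧ B = ({i, j} : Set ℕ)

/-- `M` is the rank-3 Schubert matroid `S(a,b,c)` on `{1,…,n}`: its bases are exactly the
three-element subsets `{i,j,k}` of `{1,…,n}` with `i < j < k`, `a ≤ i`, `b ≤ j`, `c ≤ k`. -/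
def IsSchubert3 (n a b c : ℕ) (M : Matroid ℕ) : Prop :=
  M.E = Set.Icc 1 n ∧
  ∀ B, M.IsBase B ↔ ∃ i j k, i < j ∧ j < k ∧ a ≤ i ∧ b ≤ j ∧ c ≤ k ∧ 1 ≤ i ∧ k ≤ n ∧
    B = ({i, j, k} : Set ℕ)

end PaperPOAM

namespace PaperPOAM

/-- The set of matroids of rank 2 on the ground set `{1,…,n}`. -/
def rank2On (n : ℕ) : Set (Matroid ℕ) := {M | M.E = Set.Icc 1 n ∧ RankEq M 2}

/-- The number of isomorphism classes of matroids in a set `S` of matroids: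
the number of distinct sets of the form `{N ∈ S | N ≅ M}` for `M ∈ S`. -/
noncomputable def numIsoClasses (S : Set (Matroid ℕ)) : ℕ :=
  {C : Set (Matroid ℕ) | ∃ M ∈ S, C = {N ∈ S | MatroidIso M N}}.ncard

end PaperPOAM

namespace PaperPOAM

/-- The number of partitions of `n` all of whose parts are at least 2. -/
noncomputable def rho (n : ℕ) : ℕ :=
  Nat.card {p : n.Partition // ∀ i ∈ p.parts, 2 ≤ i}


variable {γ γ' : Type*} [DecidableEq γ] [DecidableEq γ']

-- ===== auxiliary development =====
section Aux7
attribute [local instance] Classical.propDecidable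


/-- multiset of fiber sizes of `g` on `s`. -/
noncomputable def fsizes (s : Finset ℕ) (g : ℕ → γ) : Multiset ℕ :=
  (s.image g).val.map (fun c => (s.filter (fun a => g a = c)).card)

lemma fsizes_empty (g : ℕ → γ) : fsizes ∅ g = 0 := by simp [fsizes]

lemma image_filter_ne (s : Finset ℕ) (g : ℕ → γ) (c : γ) :
    (s.filter (fun a => g a ≠ c)).image g = (s.image g).erase c := by
  ext x
  simp only [Finset.mem_image, Finset.mem_filter, Finset.mem_erase]
  constructor
  · rintro ⟨a, ⟨ha, hne⟩, rfl⟩; exact ⟨hne, a, ha, rfl⟩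
  · rintro ⟨hne, a, ha, rfl⟩; exact ⟨a, ⟨ha, hne⟩, rfl⟩

lemma fsizes_cons {s : Finset ℕ} {g : ℕ → γ} {c : γ} (hc : c ∈ s.image g) :
    fsizes s g = (s.filter (fun a => g a = c)).card ::ₘ
      fsizes (s.filter (fun a => g a ≠ c)) g := by
  unfold fsizes
  rw [image_filter_ne]
  have h1 : (s.image g).val = c ::ₘ ((s.image g).erase c).val := by
    rw [Finset.erase_val]; exact (Multiset.cons_erase hc).symm
  rw [h1, Multiset.map_cons]
  congr 1
  apply Multiset.map_congr rfl
  intro c' hc'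
  have hne : c' ≠ c := by
    have := Finset.mem_erase.1 (by exact hc' : c' ∈ (s.image g).erase c)
    exact this.1
  congr 1
  ext a
  simp only [Finset.mem_filter]
  constructor
  · rintro ⟨ha, hgc⟩; exact ⟨⟨ha, by rw [hgc]; exact hne⟩, hgc⟩
  · rintro ⟨⟨ha, _⟩, hgc⟩; exact ⟨ha, hgc⟩



lemma card_eq_of_bijOn {s t : Finset ℕ} {f : ℕ → ℕ} (hf : Set.BijOn f ↑s ↑t) :
    s.card = t.card := by
  have := hf.image_eq
  have h2 : (↑t : Set ℕ).ncard = (↑s : Set ℕ).ncard := by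
    rw [← this, Set.ncard_image_of_injOn hf.injOn]
  simpa [Set.ncard_coe_finset] using h2.symm

lemma fsizes_eq_of_bijOn {g : ℕ → γ} {g' : ℕ → γ'} (s : Finset ℕ) :
    ∀ (t : Finset ℕ) (f : ℕ → ℕ), Set.BijOn f ↑s ↑t →
      (∀ a ∈ s, ∀ b ∈ s, (g a = g b ↔ g' (f a) = g' (f b))) →
      fsizes s g = fsizes t g' := by
  induction s using Finset.strongInduction with
  | _ s ih =>
    intro t f hf hpres
    rcases s.eq_empty_or_nonempty with rfl | ⟨a, ha⟩
    · have : t = ∅ := by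
        have h : (↑t : Set ℕ) ⊆ f '' ∅ := by simpa using hf.surjOn
        simp only [Set.image_empty] at h
        exact Finset.coe_eq_empty.1 (Set.subset_empty_iff.1 h)
      simp [this, fsizes_empty]
    · set c := g a with hc
      set c' := g' (f a) with hc'
      set s₁ := s.filter (fun x => g x = c) with hs₁
      set s₂ := s.filter (fun x => g x ≠ c) with hs₂
      set t₁ := t.filter (fun x => g' x = c') with ht₁
      set t₂ := t.filter (fun x => g' x ≠ c') with ht₂
      have hmem : ∀ x ∈ s, (g x = c ↔ g' (f x) = c') := fun x hx => hpres x hx a ha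
      have hb1 : Set.BijOn f ↑s₁ ↑t₁ := by
        refine ⟨?_, hf.injOn.mono (by exact_mod_cast Finset.filter_subset _ s), ?_⟩
        · intro x hx
          simp only [hs₁, hs₂, ht₁, ht₂, Finset.mem_coe, Finset.mem_filter] at hx ⊢
          exact ⟨hf.mapsTo hx.1, (hmem x hx.1).1 hx.2⟩
        · intro y hy
          simp only [hs₁, hs₂, ht₁, ht₂, Finset.mem_coe, Finset.mem_filter] at hy ⊢
          obtain ⟨x, hx, rfl⟩ := hf.surjOn (by exact hy.1 : y ∈ (↑t : Set ℕ))
          refine ⟨x, ?_, rfl⟩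
          simp only [hs₁, Finset.mem_coe, Finset.mem_filter]
          exact ⟨hx, (hmem x hx).2 hy.2⟩
      have hb2 : Set.BijOn f ↑s₂ ↑t₂ := by
        refine ⟨?_, hf.injOn.mono (by exact_mod_cast Finset.filter_subset _ s), ?_⟩
        · intro x hx
          simp only [hs₁, hs₂, ht₁, ht₂, Finset.mem_coe, Finset.mem_filter] at hx ⊢
          exact ⟨hf.mapsTo hx.1, fun h => hx.2 ((hmem x hx.1).2 h)⟩
        · intro y hy
          simp only [hs₁, hs₂, ht₁, ht₂, Finset.mem_coe, Finset.mem_filter] at hy ⊢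
          obtain ⟨x, hx, rfl⟩ := hf.surjOn (by exact hy.1 : y ∈ (↑t : Set ℕ))
          refine ⟨x, ?_, rfl⟩
          simp only [hs₂, Finset.mem_coe, Finset.mem_filter]
          exact ⟨hx, fun h => hy.2 ((hmem x hx).1 h)⟩
      have hcc : c ∈ s.image g := Finset.mem_image_of_mem g ha
      have hcc' : c' ∈ t.image g' := Finset.mem_image_of_mem g' (hf.mapsTo ha)
      rw [fsizes_cons hcc, fsizes_cons hcc']
      have hcard : s₁.card = t₁.card := card_eq_of_bijOn hb1
      have hss : s₂ ⊂ s := by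
        refine Finset.ssubset_iff_of_subset (Finset.filter_subset _ _) |>.2 ⟨a, ha, ?_⟩
        simp [hs₂, hc]
      have hrec := ih s₂ hss t₂ f hb2 (fun x hx y hy =>
        hpres x (Finset.filter_subset _ _ hx) y (Finset.filter_subset _ _ hy))
      rw [← hs₁, ← hs₂, ← ht₁, ← ht₂, hcard, hrec]



lemma exists_bijOn_of_card_eq {s t : Finset ℕ} (h : s.card = t.card) :
    ∃ f : ℕ → ℕ, Set.BijOn f ↑s ↑t := by
  let e := Finset.equivOfCardEq h
  refine ⟨fun x => if hx : x ∈ s then (e ⟨x, hx⟩ : ℕ) else x, ?_, ?_, ?_⟩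
  · intro x hx
    simp only [Finset.mem_coe] at hx ⊢
    rw [dif_pos hx]
    exact (e ⟨x, hx⟩).2
  · intro x hx y hy hxy
    simp only [Finset.mem_coe] at hx hy
    simp only [dif_pos hx, dif_pos hy] at hxy
    have := e.injective (Subtype.ext hxy)
    exact congrArg Subtype.val this
  · intro y hy
    simp only [Finset.mem_coe] at hy
    obtain ⟨x, hx⟩ := e.surjective ⟨y, hy⟩
    refine ⟨(x : ℕ), x.2, ?_⟩
    simp only [dif_pos x.2, Subtype.coe_eta, hx]

lemma exists_bijOn_of_fsizes_eq {g : ℕ → γ} {g' : ℕ → γ'} (s : Finset ℕ) :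
    ∀ (t : Finset ℕ), fsizes s g = fsizes t g' →
      ∃ f : ℕ → ℕ, Set.BijOn f ↑s ↑t ∧
        ∀ a ∈ s, ∀ b ∈ s, (g a = g b ↔ g' (f a) = g' (f b)) := by
  induction s using Finset.strongInduction with
  | _ s ih =>
    intro t h
    rcases s.eq_empty_or_nonempty with rfl | ⟨a, ha⟩
    · have ht : t = ∅ := by
        by_contra hne
        obtain ⟨b, hb⟩ := Finset.nonempty_of_ne_empty hne
        have : (fsizes t g') ≠ 0 := by
          rw [fsizes_cons (Finset.mem_image_of_mem g' hb)]
          exact Multiset.cons_ne_zero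
        exact this (by rw [← h, fsizes_empty])
      subst ht
      refine ⟨id, ?_, by simp⟩
      simpa using Set.bijOn_empty (id : ℕ → ℕ)
    · set c := g a with hc
      set s₁ := s.filter (fun x => g x = c) with hs₁
      set s₂ := s.filter (fun x => g x ≠ c) with hs₂
      have hcc : c ∈ s.image g := Finset.mem_image_of_mem g ha
      rw [fsizes_cons hcc] at h
      -- find a fiber of t with the same size
      have hk : s₁.card ∈ fsizes t g' := by rw [← h]; exact Multiset.mem_cons_self _ _
      have hk' : ∃ c' ∈ t.image g', (t.filter (fun x => g' x = c')).card = s₁.card := by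
        unfold fsizes at hk
        exact Multiset.mem_map.1 hk
      obtain ⟨c', hc', hkc⟩ := hk'
      set t₁ := t.filter (fun x => g' x = c') with ht₁
      set t₂ := t.filter (fun x => g' x ≠ c') with ht₂
      have hcard : s₁.card = t₁.card := hkc.symm
      rw [fsizes_cons hc', ← hcard] at h
      have h2 : fsizes s₂ g = fsizes t₂ g' := by
        rw [← hs₁, ← hs₂, ← ht₂] at h
        exact (Multiset.cons_inj_right _).1 h
      have hss : s₂ ⊂ s := by
        refine Finset.ssubset_iff_of_subset (Finset.filter_subset _ _) |>.2 ⟨a, ha, ?_⟩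
        simp [hs₂, hc]
      obtain ⟨f₂, hf₂, hpres₂⟩ := ih s₂ hss t₂ h2
      obtain ⟨f₁, hf₁⟩ := exists_bijOn_of_card_eq hcard
      refine ⟨fun x => if x ∈ s₁ then f₁ x else f₂ x, ?_, ?_⟩
      · constructor
        · intro x hx
          simp only [Finset.mem_coe] at hx ⊢
          by_cases h1 : x ∈ s₁
          · simp only [if_pos h1]
            exact Finset.filter_subset _ _ (by exact_mod_cast hf₁.mapsTo h1)
          · have h2x : x ∈ s₂ := by
              simp only [hs₂, Finset.mem_filter]
              refine ⟨hx, fun hg => h1 ?_⟩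
              simp only [hs₁, Finset.mem_filter]
              exact ⟨hx, hg⟩
            simp only [if_neg h1]
            exact Finset.filter_subset _ _ (by exact_mod_cast hf₂.mapsTo h2x)
        refine ⟨?_, ?_⟩
        · intro x hx y hy hxy
          simp only [Finset.mem_coe] at hx hy
          have hx' : x ∈ s₁ ∨ x ∈ s₂ := by
            by_cases h1 : g x = c
            · exact Or.inl (by simp [hs₁, hx, h1])
            · exact Or.inr (by simp [hs₂, hx, h1])
          have hy' : y ∈ s₁ ∨ y ∈ s₂ := by
            by_cases h1 : g y = c
            · exact Or.inl (by simp [hs₁, hy, h1])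
            · exact Or.inr (by simp [hs₂, hy, h1])
          have hdisj : ∀ z, z ∈ s₁ → z ∈ s₂ → False := by
            intro z hz1 hz2
            simp only [hs₁, Finset.mem_filter] at hz1
            simp only [hs₂, Finset.mem_filter] at hz2
            exact hz2.2 hz1.2
          rcases hx' with hx1 | hx2 <;> rcases hy' with hy1 | hy2
          · simp only [if_pos hx1, if_pos hy1] at hxy
            exact hf₁.injOn hx1 hy1 hxy
          · simp only [if_pos hx1, if_neg (fun h => hdisj y h hy2)] at hxy
            exfalso
            have m1 : f₁ x ∈ t₁ := by exact_mod_cast hf₁.mapsTo hx1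
            have m2 : f₂ y ∈ t₂ := by exact_mod_cast hf₂.mapsTo hy2
            rw [hxy] at m1
            simp only [ht₁, Finset.mem_filter] at m1
            simp only [ht₂, Finset.mem_filter] at m2
            exact m2.2 m1.2
          · simp only [if_neg (fun h => hdisj x h hx2), if_pos hy1] at hxy
            exfalso
            have m1 : f₁ y ∈ t₁ := by exact_mod_cast hf₁.mapsTo hy1
            have m2 : f₂ x ∈ t₂ := by exact_mod_cast hf₂.mapsTo hx2
            rw [← hxy] at m1
            simp only [ht₁, Finset.mem_filter] at m1
            simp only [ht₂, Finset.mem_filter] at m2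
            exact m2.2 m1.2
          · simp only [if_neg (fun h => hdisj x h hx2), if_neg (fun h => hdisj y h hy2)] at hxy
            exact hf₂.injOn hx2 hy2 hxy
        · intro y hy
          simp only [Finset.mem_coe] at hy
          by_cases h1 : g' y = c'
          · have : y ∈ t₁ := by simp [ht₁, hy, h1]
            obtain ⟨x, hx, rfl⟩ := hf₁.surjOn (by exact_mod_cast this)
            have hx1 : x ∈ s₁ := by exact_mod_cast hx
            exact ⟨x, Finset.filter_subset _ _ hx1, by simp only [if_pos hx1]⟩
          · have : y ∈ t₂ := by simp [ht₂, hy, h1]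
            obtain ⟨x, hx, rfl⟩ := hf₂.surjOn (by exact_mod_cast this)
            have hx2 : x ∈ s₂ := by exact_mod_cast hx
            have hx1 : x ∉ s₁ := by
              simp only [hs₂, Finset.mem_filter] at hx2
              simp only [hs₁, Finset.mem_filter]
              intro hcon; exact hx2.2 hcon.2
            exact ⟨x, Finset.filter_subset _ _ hx2, by simp only [if_neg hx1]⟩
      · intro x hx y hy
        have hx' : x ∈ s₁ ∨ x ∈ s₂ := by
          by_cases h1 : g x = c
          · exact Or.inl (by simp [hs₁, hx, h1])
          · exact Or.inr (by simp [hs₂, hx, h1])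
        have hy' : y ∈ s₁ ∨ y ∈ s₂ := by
          by_cases h1 : g y = c
          · exact Or.inl (by simp [hs₁, hy, h1])
          · exact Or.inr (by simp [hs₂, hy, h1])
        have hdisj : ∀ z, z ∈ s₁ → z ∈ s₂ → False := by
          intro z hz1 hz2
          simp only [hs₁, Finset.mem_filter] at hz1
          simp only [hs₂, Finset.mem_filter] at hz2
          exact hz2.2 hz1.2
        have hm1 : ∀ z (hz : z ∈ s₁), g z = c ∧ g' (f₁ z) = c' := by
          intro z hz
          have m1 : f₁ z ∈ t₁ := by exact_mod_cast hf₁.mapsTo hz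
          simp only [ht₁, Finset.mem_filter] at m1
          simp only [hs₁, Finset.mem_filter] at hz
          exact ⟨hz.2, m1.2⟩
        have hm2 : ∀ z (hz : z ∈ s₂), g z ≠ c ∧ g' (f₂ z) ≠ c' := by
          intro z hz
          have m2 : f₂ z ∈ t₂ := by exact_mod_cast hf₂.mapsTo hz
          simp only [ht₂, Finset.mem_filter] at m2
          simp only [hs₂, Finset.mem_filter] at hz
          exact ⟨hz.2, m2.2⟩
        rcases hx' with hx1 | hx2 <;> rcases hy' with hy1 | hy2
        · simp only [if_pos hx1, if_pos hy1]
          simp [(hm1 x hx1).1, (hm1 y hy1).1, (hm1 x hx1).2, (hm1 y hy1).2]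
        · simp only [if_pos hx1, if_neg (fun h => hdisj y h hy2)]
          constructor
          · intro hcon
            exact absurd ((hm1 x hx1).1 ▸ hcon.symm) (by simpa using (hm2 y hy2).1)
          · intro hcon
            exact absurd ((hm1 x hx1).2 ▸ hcon.symm) (by simpa using (hm2 y hy2).2)
        · simp only [if_neg (fun h => hdisj x h hx2), if_pos hy1]
          constructor
          · intro hcon
            exact absurd ((hm1 y hy1).1 ▸ hcon) (by simpa using (hm2 x hx2).1)
          · intro hcon
            exact absurd ((hm1 y hy1).2 ▸ hcon) (by simpa using (hm2 x hx2).2)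
        · simp only [if_neg (fun h => hdisj x h hx2), if_neg (fun h => hdisj y h hy2)]
          exact hpres₂ x hx2 y hy2



/-- number of partitions of `j` with at least two parts -/
noncomputable def tcount (j : ℕ) : ℕ := Nat.card {p : j.Partition // 2 ≤ Multiset.card p.parts}

noncomputable def pcount (j : ℕ) : ℕ := Nat.card (Nat.Partition j)


lemma pcount_eq_tcount_add_one {j : ℕ} (hj : 1 ≤ j) : pcount j = tcount j + 1 := by
  classical
  have he : {p : j.Partition // 2 ≤ Multiset.card p.parts} ⊕
      {p : j.Partition // ¬ 2 ≤ Multiset.card p.parts} ≃ Nat.Partition j :=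
    Equiv.sumCompl _
  have hu : Nat.card {p : j.Partition // ¬ 2 ≤ Multiset.card p.parts} = 1 := by
    rw [Nat.card_eq_one_iff_unique]
    constructor
    · constructor
      rintro ⟨p, hp⟩ ⟨q, hq⟩
      have hcard : ∀ r : j.Partition, ¬ 2 ≤ Multiset.card r.parts → r.parts = {j} := by
        intro r hr
        have h1 : Multiset.card r.parts ≤ 1 := by omega
        rcases Nat.le_one_iff_eq_zero_or_eq_one.1 h1 with h0 | h1'
        · exfalso
          have hz := Multiset.card_eq_zero.1 h0
          have := r.parts_sum
          rw [hz] at this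
          simp at this
          omega
        · obtain ⟨a, ha⟩ := Multiset.card_eq_one.1 h1'
          have := r.parts_sum
          rw [ha] at this
          simp at this
          rw [ha, this]
      have := (hcard p hp).trans (hcard q hq).symm
      exact Subtype.ext (Nat.Partition.ext this)
    · exact ⟨⟨Nat.Partition.indiscrete j, by
        rw [Nat.Partition.indiscrete_parts (by omega)]; simp⟩⟩
  have := Nat.card_congr he
  rw [Nat.card_sum, hu] at this
  rw [pcount, ← this, tcount]

/-- removing/adding a part equal to 1 -/
noncomputable def partitionEquiv (n : ℕ) (hn : 1 ≤ n) :
    Nat.Partition n ≃ (Nat.Partition (n - 1) ⊕ {p : n.Partition // ∀ i ∈ p.parts, 2 ≤ i}) where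
  toFun p :=
    if h : (1 : ℕ) ∈ p.parts then
      Sum.inl ⟨p.parts.erase 1,
        fun {i} hi => p.parts_pos (Multiset.mem_of_mem_erase hi),
        by
          have := p.parts_sum
          have h2 : p.parts = 1 ::ₘ p.parts.erase 1 := (Multiset.cons_erase h).symm
          rw [h2, Multiset.sum_cons] at this
          omega⟩
    else
      Sum.inr ⟨p, fun i hi => by
        have hpos := p.parts_pos hi
        rcases Nat.lt_or_ge i 2 with hlt | hge
        · interval_cases i
          exact absurd hi h
        · exact hge⟩
  invFun q :=
    match q with
    | Sum.inl q => ⟨1 ::ₘ q.parts,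
        fun {i} hi => by
          rcases Multiset.mem_cons.1 hi with rfl | hi
          · omega
          · exact q.parts_pos hi,
        by rw [Multiset.sum_cons, q.parts_sum]; omega⟩
    | Sum.inr p => p.val
  left_inv p := by
    by_cases h : (1 : ℕ) ∈ p.parts
    · simp only [dif_pos h]
      exact Nat.Partition.ext (Multiset.cons_erase h)
    · simp only [dif_neg h]
  right_inv q := by
    match q with
    | Sum.inl q =>
      simp only []
      rw [dif_pos (Multiset.mem_cons_self 1 q.parts)]
      congr 1
      exact Nat.Partition.ext (Multiset.erase_cons_head 1 q.parts)
    | Sum.inr p =>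
      simp only []
      rw [dif_neg (by
        intro hcon
        have := p.2 1 hcon
        omega)]

lemma pcount_succ {n : ℕ} (hn : 1 ≤ n) : pcount n = pcount (n - 1) + rho n := by
  have := Nat.card_congr (partitionEquiv n hn)
  rw [Nat.card_sum] at this
  rw [pcount, this, pcount, rho]

lemma tcount_succ {n : ℕ} (hn : 2 ≤ n) : tcount n = tcount (n - 1) + rho n := by
  have h1 := pcount_eq_tcount_add_one (j := n) (by omega)
  have h2 := pcount_eq_tcount_add_one (j := n - 1) (by omega)
  have h3 := pcount_succ (n := n) (by omega)
  omega



def Invs (k : ℕ) : Set (Multiset ℕ) :=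
  {μ | (∀ i ∈ μ, 0 < i) ∧ 2 ≤ Multiset.card μ ∧ μ.sum ≤ k}

def Qset (k : ℕ) : Set (Multiset ℕ) :=
  {μ | (∀ i ∈ μ, 0 < i) ∧ 2 ≤ Multiset.card μ ∧ μ.sum = k}

lemma Invs_finite (k : ℕ) : (Invs k).Finite := by
  have hsub : Invs k ⊆ ⋃ j ∈ Finset.range (k + 1),
      Set.range (fun p : Nat.Partition j => p.parts) := by
    rintro μ ⟨hpos, hcard, hsum⟩
    refine Set.mem_biUnion (Finset.mem_range.2 (by omega) : μ.sum ∈ Finset.range (k+1)) ?_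
    exact ⟨⟨μ, fun {i} hi => hpos i hi, rfl⟩, rfl⟩
  exact Set.Finite.subset (Set.Finite.biUnion (Finset.range (k+1)).finite_toSet
    (fun j _ => Set.finite_range _)) hsub

noncomputable def Nc (k : ℕ) : ℕ := (Invs k).ncard

noncomputable def qEquiv (k : ℕ) : ↥(Qset k) ≃ {p : k.Partition // 2 ≤ Multiset.card p.parts} where
  toFun μ := ⟨⟨μ.1, fun {i} hi => μ.2.1 i hi, μ.2.2.2⟩, μ.2.2.1⟩
  invFun p := ⟨p.1.parts, fun i hi => p.1.parts_pos hi, p.2, p.1.parts_sum⟩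
  left_inv μ := rfl
  right_inv p := by
    refine Subtype.ext (Nat.Partition.ext rfl)

lemma Qset_ncard (k : ℕ) : (Qset k).ncard = tcount k := by
  rw [← Nat.card_coe_set_eq, Nat.card_congr (qEquiv k), tcount]

lemma Nc_succ {k : ℕ} (hk : 1 ≤ k) : Nc k = Nc (k - 1) + tcount k := by
  have hunion : Invs k = Invs (k - 1) ∪ Qset k := by
    ext μ
    simp only [Invs, Qset, Set.mem_union, Set.mem_setOf_eq]
    constructor
    · rintro ⟨hpos, hcard, hsum⟩
      rcases Nat.lt_or_ge μ.sum k with hlt | hge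
      · exact Or.inl ⟨hpos, hcard, by omega⟩
      · exact Or.inr ⟨hpos, hcard, by omega⟩
    · rintro (⟨hpos, hcard, hsum⟩ | ⟨hpos, hcard, hsum⟩)
      · exact ⟨hpos, hcard, by omega⟩
      · exact ⟨hpos, hcard, by omega⟩
  have hdisj : Disjoint (Invs (k - 1)) (Qset k) := by
    rw [Set.disjoint_left]
    rintro μ ⟨_, _, hsum⟩ ⟨_, _, hsum'⟩
    omega
  rw [Nc, hunion, Set.ncard_union_eq hdisj (Invs_finite _)
    (Set.Finite.subset (Invs_finite k) (by rintro μ ⟨h1, h2, h3⟩; exact ⟨h1, h2, by omega⟩)),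
    Qset_ncard, Nc]


variable {M : Matroid ℕ} {e f : ℕ}

lemma nonloop_iff (he : e ∈ M.E) : M.Indep {e} ↔ e ∉ M.closure ∅ := by
  rw [Matroid.indep_iff_forall_notMem_closure_diff (by simpa using he)]
  constructor
  · intro h
    have := h (by simp : e ∈ ({e} : Set ℕ))
    simpa using this
  · intro h
    intro x hx
    rcases hx with rfl
    simpa using h

lemma closure_singleton_eq_iff (he : e ∈ M.E) (hf : f ∈ M.E)
    (hie : M.Indep {e}) (hif : M.Indep {f}) :
    M.closure {e} = M.closure {f} ↔ e ∈ M.closure {f} := by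
  constructor
  · intro h
    rw [← h]
    exact M.mem_closure_self e he
  · intro h
    refine le_antisymm ?_ ?_
    · exact M.closure_subset_closure_of_subset_closure (by simpa using h)
    · have hex : f ∈ M.closure (insert e ∅) \ M.closure ∅ := by
        refine Matroid.closure_exchange ⟨?_, ?_⟩
        · simpa using h
        · exact (nonloop_iff he).1 hie
      exact M.closure_subset_closure_of_subset_closure (by simpa using hex.1)

lemma indep_pair_iff (hne : e ≠ f) (he : e ∈ M.E) (hf : f ∈ M.E)
    (hie : M.Indep {e}) (hif : M.Indep {f}) :
    M.Indep {e, f} ↔ M.closure {e} ≠ M.closure {f} := by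
  have h1 : ({e, f} : Set ℕ) = insert e {f} := rfl
  rw [h1, hif.insert_indep_iff_of_notMem (by simpa using hne)]
  constructor
  · rintro ⟨-, h⟩ hcon
    exact h ((closure_singleton_eq_iff he hf hie hif).1 hcon)
  · intro h
    exact ⟨he, fun hmem => h ((closure_singleton_eq_iff he hf hie hif).2 hmem)⟩


-- ===== rank-2 matroid facts =====

lemma rank2_ground_finite {n : ℕ} {M : Matroid ℕ} (h : M ∈ rank2On n) : M.E.Finite := by
  rw [h.1]; exact Set.finite_Icc 1 n

lemma base_iff_of_rank2 {n : ℕ} {M : Matroid ℕ} (h : M ∈ rank2On n) {B : Set ℕ} :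
    M.IsBase B ↔ M.Indep B ∧ B.ncard = 2 := by
  constructor
  · intro hB
    exact ⟨hB.indep, h.2 B hB⟩
  · rintro ⟨hI, hcard⟩
    obtain ⟨B', hB', hBB'⟩ := hI.exists_isBase_superset
    have hfin : B'.Finite := (rank2_ground_finite h).subset hB'.subset_ground
    have : B = B' := Set.eq_of_subset_of_ncard_le hBB' (by rw [h.2 B' hB', hcard]) hfin
    rwa [this]

lemma base_pair_iff {n : ℕ} {M : Matroid ℕ} (h : M ∈ rank2On n) {B : Set ℕ} :
    M.IsBase B ↔ ∃ e f, e ≠ f ∧ e ∈ M.E ∧ f ∈ M.E ∧ M.Indep {e} ∧ M.Indep {f} ∧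
      M.closure {e} ≠ M.closure {f} ∧ B = {e, f} := by
  constructor
  · intro hB
    have hcard := h.2 B hB
    obtain ⟨e, f, hne, rfl⟩ := Set.ncard_eq_two.1 hcard
    have heE : e ∈ M.E := hB.subset_ground (by simp)
    have hfE : f ∈ M.E := hB.subset_ground (by simp)
    have hie : M.Indep {e} := hB.indep.subset (by simp)
    have hif : M.Indep {f} := hB.indep.subset (by simp)
    exact ⟨e, f, hne, heE, hfE, hie, hif,
      (indep_pair_iff hne heE hfE hie hif).1 hB.indep, rfl⟩
  · rintro ⟨e, f, hne, heE, hfE, hie, hif, hcls, rfl⟩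
    refine (base_iff_of_rank2 h).2 ⟨(indep_pair_iff hne heE hfE hie hif).2 hcls, ?_⟩
    exact Set.ncard_pair hne

/-- the nonloop elements of `M`, as a finset -/
noncomputable def nlF (n : ℕ) (M : Matroid ℕ) : Finset ℕ :=
  (Finset.Icc 1 n).filter (fun e => M.Indep {e})

/-- the isomorphism invariant of a rank-2 matroid: the multiset of sizes of its
parallel classes -/
noncomputable def invM (n : ℕ) (M : Matroid ℕ) : Multiset ℕ :=
  fsizes (nlF n M) (fun e => M.closure {e})

lemma mem_nlF {n : ℕ} {M : Matroid ℕ} (h : M ∈ rank2On n) {e : ℕ} :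
    e ∈ nlF n M ↔ e ∈ M.E ∧ M.Indep {e} := by
  rw [nlF, Finset.mem_filter, h.1, Finset.mem_Icc, Set.mem_Icc]

lemma iso_indep_transfer {M N : Matroid ℕ} {f : ℕ → ℕ} (hf : Set.BijOn f M.E N.E)
    (hbase : ∀ B, B ⊆ M.E → (M.IsBase B ↔ N.IsBase (f '' B))) {I : Set ℕ} (hI : I ⊆ M.E) :
    M.Indep I ↔ N.Indep (f '' I) := by
  constructor
  · intro h
    obtain ⟨B, hB, hIB⟩ := h.exists_isBase_superset
    have := (hbase B hB.subset_ground).1 hB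
    exact this.indep.subset (Set.image_mono hIB)
  · intro h
    obtain ⟨B', hB', hIB'⟩ := h.exists_isBase_superset
    set B := M.E ∩ f ⁻¹' B' with hBdef
    have himg : f '' B = B' := by
      apply Set.Subset.antisymm
      · rintro y ⟨x, ⟨-, hx2⟩, rfl⟩
        exact hx2
      · intro y hy
        have hyE : y ∈ N.E := hB'.subset_ground hy
        rw [← hf.image_eq] at hyE
        obtain ⟨x, hx, rfl⟩ := hyE
        exact ⟨x, ⟨hx, hy⟩, rfl⟩
    have hBase : M.IsBase B := by
      rw [hbase B Set.inter_subset_left, himg]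
      exact hB'
    refine hBase.indep.subset ?_
    intro x hx
    exact ⟨hI hx, hIB' ⟨x, hx, rfl⟩⟩

lemma iso_iff_invM {n : ℕ} {M N : Matroid ℕ} (hM : M ∈ rank2On n) (hN : N ∈ rank2On n) :
    MatroidIso M N ↔ invM n M = invM n N := by
  constructor
  · rintro ⟨f, hf, hbase⟩
    -- singleton and pair transfers
    have hsing : ∀ e ∈ M.E, (M.Indep {e} ↔ N.Indep {f e}) := by
      intro e he
      have := iso_indep_transfer hf hbase (by simpa using he : ({e} : Set ℕ) ⊆ M.E)
      rwa [Set.image_singleton] at this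
    have hpair : ∀ e ∈ M.E, ∀ e' ∈ M.E, (M.Indep {e, e'} ↔ N.Indep {f e, f e'}) := by
      intro e he e' he'
      have hsub : ({e, e'} : Set ℕ) ⊆ M.E := by
        rintro x (rfl | rfl) <;> assumption
      have := iso_indep_transfer hf hbase hsub
      rwa [Set.image_pair] at this
    have hbij : Set.BijOn f ↑(nlF n M) ↑(nlF n N) := by
      refine ⟨?_, hf.injOn.mono ?_, ?_⟩
      · intro e he
        simp only [Finset.mem_coe] at he ⊢
        rw [mem_nlF hM] at he
        rw [mem_nlF hN]
        exact ⟨hf.mapsTo he.1, (hsing e he.1).1 he.2⟩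
      · intro e he
        simp only [Finset.mem_coe] at he
        exact ((mem_nlF hM).1 he).1
      · intro y hy
        simp only [Finset.mem_coe] at hy ⊢
        rw [mem_nlF hN] at hy
        have := hy.1
        rw [← hf.image_eq] at this
        obtain ⟨x, hx, rfl⟩ := this
        refine ⟨x, ?_, rfl⟩
        simp only [Finset.mem_coe]
        rw [mem_nlF hM]
        exact ⟨hx, (hsing x hx).2 hy.2⟩
    have hpres : ∀ a ∈ nlF n M, ∀ b ∈ nlF n M,
        (M.closure {a} = M.closure {b} ↔ N.closure {f a} = N.closure {f b}) := by
      intro a ha b hb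
      obtain ⟨haE, hia⟩ := (mem_nlF hM).1 ha
      obtain ⟨hbE, hib⟩ := (mem_nlF hM).1 hb
      rcases eq_or_ne a b with rfl | hne
      · simp
      · have hfne : f a ≠ f b := fun hcon => hne (hf.injOn haE hbE hcon)
        have h1 := indep_pair_iff hne haE hbE hia hib
        have h2 := indep_pair_iff hfne (hf.mapsTo haE) (hf.mapsTo hbE)
          ((hsing a haE).1 hia) ((hsing b hbE).1 hib)
        have h3 := hpair a haE b hbE
        constructor
        · intro hcc
          by_contra hcon
          exact (h1.1 (h3.2 (h2.2 hcon))) hcc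
        · intro hcc
          by_contra hcon
          exact (h2.1 (h3.1 (h1.2 hcon))) hcc
    exact fsizes_eq_of_bijOn _ _ f hbij hpres
  · intro h
    obtain ⟨φ, hφ, hpres⟩ := exists_bijOn_of_fsizes_eq (g := fun e => M.closure {e})
      (g' := fun e => N.closure {e}) (nlF n M) (nlF n N) h
    -- bijection between loops
    set lM := (Finset.Icc 1 n) \ nlF n M with hlM
    set lN := (Finset.Icc 1 n) \ nlF n N with hlN
    have hsubM : nlF n M ⊆ Finset.Icc 1 n := Finset.filter_subset _ _
    have hsubN : nlF n N ⊆ Finset.Icc 1 n := Finset.filter_subset _ _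
    have hcards : (nlF n M).card = (nlF n N).card := card_eq_of_bijOn hφ
    have hlcard : lM.card = lN.card := by
      rw [hlM, hlN, Finset.card_sdiff_of_subset hsubM, Finset.card_sdiff_of_subset hsubN, hcards]
    obtain ⟨ψ, hψ⟩ := exists_bijOn_of_card_eq hlcard
    set F : ℕ → ℕ := fun x => if x ∈ nlF n M then φ x else if x ∈ lM then ψ x else x with hF
    have hFnl : ∀ x ∈ nlF n M, F x = φ x := by
      intro x hx; simp only [hF, if_pos hx]
    have hFl : ∀ x ∈ lM, F x = ψ x := by
      intro x hx
      have hx' : x ∉ nlF n M := (Finset.mem_sdiff.1 hx).2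
      simp only [hF, if_neg hx', if_pos hx]
    have hEM : M.E = ↑(Finset.Icc 1 n) := by rw [hM.1, Finset.coe_Icc]
    have hEN : N.E = ↑(Finset.Icc 1 n) := by rw [hN.1, Finset.coe_Icc]
    have hsplitM : ∀ x, x ∈ M.E → (x ∈ nlF n M ∨ x ∈ lM) := by
      intro x hx
      rw [hEM, Finset.mem_coe] at hx
      by_cases h1 : x ∈ nlF n M
      · exact Or.inl h1
      · exact Or.inr (Finset.mem_sdiff.2 ⟨hx, h1⟩)
    have hsplitN : ∀ x, x ∈ N.E → (x ∈ nlF n N ∨ x ∈ lN) := by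
      intro x hx
      rw [hEN, Finset.mem_coe] at hx
      by_cases h1 : x ∈ nlF n N
      · exact Or.inl h1
      · exact Or.inr (Finset.mem_sdiff.2 ⟨hx, h1⟩)
    have hnlE : ∀ x ∈ nlF n M, x ∈ M.E := by
      intro x hx; rw [hEM, Finset.mem_coe]; exact hsubM hx
    have hlE : ∀ x ∈ lM, x ∈ M.E := by
      intro x hx; rw [hEM, Finset.mem_coe]; exact (Finset.mem_sdiff.1 hx).1
    have hnlEN : ∀ x ∈ nlF n N, x ∈ N.E := by
      intro x hx; rw [hEN, Finset.mem_coe]; exact hsubN hx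
    have hlEN : ∀ x ∈ lN, x ∈ N.E := by
      intro x hx; rw [hEN, Finset.mem_coe]; exact (Finset.mem_sdiff.1 hx).1
    have hFmem : ∀ x ∈ nlF n M, F x ∈ nlF n N := by
      intro x hx; rw [hFnl x hx]; exact_mod_cast hφ.mapsTo hx
    have hFmem' : ∀ x ∈ lM, F x ∈ lN := by
      intro x hx; rw [hFl x hx]; exact_mod_cast hψ.mapsTo hx
    have hdisjN : ∀ y, y ∈ nlF n N → y ∈ lN → False := by
      intro y h1 h2; exact (Finset.mem_sdiff.1 h2).2 h1
    have hbijF : Set.BijOn F M.E N.E := by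
      refine ⟨?_, ?_, ?_⟩
      · intro x hx
        rcases hsplitM x hx with h1 | h1
        · exact hnlEN _ (hFmem x h1)
        · exact hlEN _ (hFmem' x h1)
      · intro x hx y hy hxy
        rcases hsplitM x hx with h1 | h1 <;> rcases hsplitM y hy with h2 | h2
        · rw [hFnl x h1, hFnl y h2] at hxy
          exact hφ.injOn h1 h2 hxy
        · exfalso
          refine hdisjN (F y) ?_ (hFmem' y h2)
          rw [← hxy]; exact hFmem x h1
        · exfalso
          refine hdisjN (F x) ?_ (hFmem' x h1)
          rw [hxy]; exact hFmem y h2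
        · rw [hFl x h1, hFl y h2] at hxy
          exact hψ.injOn h1 h2 hxy
      · intro y hy
        rcases hsplitN y hy with h1 | h1
        · obtain ⟨x, hx, rfl⟩ := hφ.surjOn (by exact_mod_cast h1)
          have hx' : x ∈ nlF n M := by exact_mod_cast hx
          exact ⟨x, hnlE x hx', hFnl x hx'⟩
        · obtain ⟨x, hx, rfl⟩ := hψ.surjOn (by exact_mod_cast h1)
          have hx' : x ∈ lM := by exact_mod_cast hx
          exact ⟨x, hlE x hx', hFl x hx'⟩
    refine ⟨F, hbijF, ?_⟩
    intro B hB
    constructor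
    · intro hBase
      obtain ⟨e, f, hne, heE, hfE, hie, hif, hcls, rfl⟩ := (base_pair_iff hM).1 hBase
      have he' : e ∈ nlF n M := (mem_nlF hM).2 ⟨heE, hie⟩
      have hf' : f ∈ nlF n M := (mem_nlF hM).2 ⟨hfE, hif⟩
      have himg : F '' {e, f} = {F e, F f} := Set.image_pair F e f
      rw [himg]
      have hFe := (mem_nlF hN).1 (hFmem e he')
      have hFf := (mem_nlF hN).1 (hFmem f hf')
      refine (base_pair_iff hN).2 ⟨F e, F f, ?_, hFe.1, hFf.1, hFe.2, hFf.2, ?_, rfl⟩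
      · intro hcon
        exact hne (hbijF.injOn heE hfE hcon)
      · intro hcon
        apply hcls
        rw [hFnl e he', hFnl f hf'] at hcon
        exact (hpres e he' f hf').2 hcon
    · intro hBase
      have hcard2 : (F '' B).ncard = 2 := hN.2 _ hBase
      have hBcard : B.ncard = 2 := by
        rw [← hcard2, Set.ncard_image_of_injOn (hbijF.injOn.mono hB)]
      obtain ⟨e, f, hne, rfl⟩ := Set.ncard_eq_two.1 hBcard
      have heE : e ∈ M.E := hB (by simp)
      have hfE : f ∈ M.E := hB (by simp)
      rw [Set.image_pair] at hBase
      have hFef : F e ≠ F f := fun hcon => hne (hbijF.injOn heE hfE hcon)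
      have hFeN : F e ∈ N.E := hbijF.mapsTo heE
      have hFfN : F f ∈ N.E := hbijF.mapsTo hfE
      have hiFe : N.Indep {F e} := hBase.indep.subset (by simp)
      have hiFf : N.Indep {F f} := hBase.indep.subset (by simp)
      have hclsN : N.closure {F e} ≠ N.closure {F f} :=
        (indep_pair_iff hFef hFeN hFfN hiFe hiFf).1 hBase.indep
      have he' : e ∈ nlF n M := by
        rcases hsplitM e heE with h1 | h1
        · exact h1
        · exfalso
          exact hdisjN (F e) ((mem_nlF hN).2 ⟨hFeN, hiFe⟩) (hFmem' e h1)
      have hf' : f ∈ nlF n M := by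
        rcases hsplitM f hfE with h1 | h1
        · exact h1
        · exfalso
          exact hdisjN (F f) ((mem_nlF hN).2 ⟨hFfN, hiFf⟩) (hFmem' f h1)
      have hieM := ((mem_nlF hM).1 he').2
      have hifM := ((mem_nlF hM).1 hf').2
      refine (base_pair_iff hM).2 ⟨e, f, hne, heE, hfE, hieM, hifM, ?_, rfl⟩
      intro hcon
      apply hclsN
      rw [hFnl e he', hFnl f hf'] at *
      exact (hpres e he' f hf').1 hcon

-- ===== invariant lies in Invs =====

lemma fsizes_pos {γ : Type*} [DecidableEq γ] {s : Finset ℕ} {g : ℕ → γ} :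
    ∀ x ∈ fsizes s g, 0 < x := by
  intro x hx
  obtain ⟨c, hc, rfl⟩ := Multiset.mem_map.1 hx
  obtain ⟨a, ha, rfl⟩ := Finset.mem_image.1 (by exact hc : c ∈ s.image g)
  refine Finset.card_pos.2 ⟨a, ?_⟩
  simp [Finset.mem_filter, ha]

lemma fsizes_card {γ : Type*} [DecidableEq γ] (s : Finset ℕ) (g : ℕ → γ) :
    Multiset.card (fsizes s g) = (s.image g).card := by
  rw [fsizes, Multiset.card_map]
  rfl

lemma fsizes_sum {γ : Type*} [DecidableEq γ] (s : Finset ℕ) (g : ℕ → γ) :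
    (fsizes s g).sum = s.card := by
  have h1 : (fsizes s g).sum = ∑ c ∈ s.image g, (s.filter (fun a => g a = c)).card :=
    (Finset.sum_eq_multiset_sum _ _).symm
  rw [h1, ← Finset.card_eq_sum_card_image g s]

lemma invM_mem_Invs {n : ℕ} {M : Matroid ℕ} (hM : M ∈ rank2On n) :
    invM n M ∈ Invs n := by
  refine ⟨fun i hi => fsizes_pos i hi, ?_, ?_⟩
  · rw [invM, fsizes_card]
    obtain ⟨B, hB⟩ := M.exists_isBase
    obtain ⟨e, f, hne, heE, hfE, hie, hif, hcls, -⟩ := (base_pair_iff hM).1 hB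
    refine Finset.one_lt_card.2 ⟨M.closure {e}, ?_, M.closure {f}, ?_, hcls⟩
    · exact Finset.mem_image_of_mem _ ((mem_nlF hM).2 ⟨heE, hie⟩)
    · exact Finset.mem_image_of_mem _ ((mem_nlF hM).2 ⟨hfE, hif⟩)
  · rw [invM, fsizes_sum]
    calc (nlF n M).card ≤ (Finset.Icc 1 n).card :=
          Finset.card_le_card (Finset.filter_subset _ _)
      _ = n := by rw [Nat.card_Icc]; omega

-- ===== construction of a rank-2 matroid with given invariant =====

/-- block coloring determined by a list of block sizes -/
def colOf : List ℕ → ℕ → ℕ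
  | [], _ => 0
  | a :: T, e =>
      if e = 0 then 0
      else if e ≤ a then 1
      else if colOf T (e - a) = 0 then 0 else colOf T (e - a) + 1

lemma colOf_cons_le {a : ℕ} {T : List ℕ} {e : ℕ} (h1 : 1 ≤ e) (h2 : e ≤ a) :
    colOf (a :: T) e = 1 := by
  simp only [colOf]
  rw [if_neg (by omega), if_pos h2]

lemma colOf_cons_gt {a : ℕ} {T : List ℕ} {e : ℕ} (h : a < e) :
    colOf (a :: T) e = if colOf T (e - a) = 0 then 0 else colOf T (e - a) + 1 := by
  simp only [colOf]
  rw [if_neg (by omega), if_neg (by omega)]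

lemma colOf_gt : ∀ (L : List ℕ) (e : ℕ), L.sum < e → colOf L e = 0 := by
  intro L
  induction L with
  | nil => intro e _; rfl
  | cons a T ih =>
    intro e he
    rw [List.sum_cons] at he
    rw [colOf_cons_gt (by omega)]
    rw [ih (e - a) (by omega)]
    simp

lemma colOf_ne_zero : ∀ (L : List ℕ), (∀ x ∈ L, 0 < x) → ∀ e, 1 ≤ e → e ≤ L.sum →
    colOf L e ≠ 0 := by
  intro L
  induction L with
  | nil => intro _ e h1 h2; simp at h2; omega
  | cons a T ih =>
    intro hL e h1 h2
    rw [List.sum_cons] at h2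
    rcases le_or_gt e a with hle | hgt
    · rw [colOf_cons_le h1 hle]; omega
    · have hr : colOf T (e - a) ≠ 0 :=
        ih (fun x hx => hL x (List.mem_cons_of_mem a hx)) (e - a) (by omega) (by omega)
      rw [colOf_cons_gt hgt, if_neg hr]
      omega

lemma fsizes_colOf : ∀ (L : List ℕ), (∀ x ∈ L, 0 < x) →
    fsizes (Finset.Icc 1 L.sum) (colOf L) = (L : Multiset ℕ) := by
  intro L
  induction L with
  | nil =>
    intro _
    have : Finset.Icc 1 ([] : List ℕ).sum = ∅ := by
      simp
    rw [this, fsizes_empty]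
    rfl
  | cons a T ih =>
    intro hL
    have ha : 0 < a := hL a List.mem_cons_self
    have hT : ∀ x ∈ T, 0 < x := fun x hx => hL x (List.mem_cons_of_mem a hx)
    have hsum : (a :: T).sum = a + T.sum := List.sum_cons
    have h1mem : (1 : ℕ) ∈ Finset.Icc 1 (a :: T).sum := by
      rw [Finset.mem_Icc, hsum]; omega
    have hcol1 : colOf (a :: T) 1 = 1 := colOf_cons_le le_rfl (by omega)
    have hc : (1 : ℕ) ∈ (Finset.Icc 1 (a :: T).sum).image (colOf (a :: T)) := by
      refine Finset.mem_image.2 ⟨1, h1mem, hcol1⟩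
    rw [fsizes_cons hc]
    -- the fiber of colour 1 is `Icc 1 a`
    have hfib : (Finset.Icc 1 (a :: T).sum).filter (fun e => colOf (a :: T) e = 1) =
        Finset.Icc 1 a := by
      ext e
      rw [Finset.mem_filter, Finset.mem_Icc, Finset.mem_Icc, hsum]
      constructor
      · rintro ⟨⟨he1, he2⟩, hcol⟩
        refine ⟨he1, ?_⟩
        by_contra hgt
        push_neg at hgt
        rw [colOf_cons_gt hgt] at hcol
        by_cases hr : colOf T (e - a) = 0
        · rw [if_pos hr] at hcol; omega
        · rw [if_neg hr] at hcol; omega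
      · rintro ⟨he1, he2⟩
        exact ⟨⟨he1, by omega⟩, colOf_cons_le he1 he2⟩
    -- the rest is `Icc (a+1) (a + T.sum)`
    have hrest : (Finset.Icc 1 (a :: T).sum).filter (fun e => colOf (a :: T) e ≠ 1) =
        Finset.Icc (a + 1) (a + T.sum) := by
      ext e
      rw [Finset.mem_filter, Finset.mem_Icc, Finset.mem_Icc, hsum]
      constructor
      · rintro ⟨⟨he1, he2⟩, hcol⟩
        refine ⟨?_, he2⟩
        by_contra hle
        push_neg at hle
        exact hcol (colOf_cons_le he1 (by omega))
      · rintro ⟨he1, he2⟩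
        refine ⟨⟨by omega, he2⟩, ?_⟩
        have hr : colOf T (e - a) ≠ 0 := colOf_ne_zero T hT (e - a) (by omega) (by omega)
        rw [colOf_cons_gt (by omega), if_neg hr]
        omega
    rw [hfib, hrest, Nat.card_Icc]
    have hshift : fsizes (Finset.Icc (a + 1) (a + T.sum)) (colOf (a :: T)) =
        fsizes (Finset.Icc 1 T.sum) (colOf T) := by
      refine fsizes_eq_of_bijOn _ _ (fun e => e - a) ⟨?_, ?_, ?_⟩ ?_
      · intro x hx
        simp only [Finset.mem_coe, Finset.mem_Icc] at hx ⊢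
        omega
      · intro x hx y hy hxy
        simp only [Finset.mem_coe, Finset.mem_Icc] at hx hy
        simp only at hxy
        omega
      · intro y hy
        simp only [Finset.mem_coe, Finset.mem_Icc] at hy
        refine ⟨y + a, ?_, ?_⟩
        · simp only [Finset.mem_coe, Finset.mem_Icc]; omega
        · simp only; omega
      · intro x hx y hy
        rw [Finset.mem_Icc] at hx hy
        have hcx : colOf (a :: T) x = colOf T (x - a) + 1 := by
          rw [colOf_cons_gt (by omega),
            if_neg (colOf_ne_zero T hT (x - a) (by omega) (by omega))]
        have hcy : colOf (a :: T) y = colOf T (y - a) + 1 := by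
          rw [colOf_cons_gt (by omega),
            if_neg (colOf_ne_zero T hT (y - a) (by omega) (by omega))]
        simp only [hcx, hcy]
        omega
    rw [hshift, ih hT]
    have : a + 1 - 1 = a := by omega
    rw [this, Multiset.cons_coe]

-- ===== the matroid defined by a coloring =====

/-- independence predicate: at most two elements, all nonloops, distinct colours -/
def IndC (k : ℕ) (c : ℕ → ℕ) (I : Set ℕ) : Prop :=
  I ⊆ {e | e ∈ Set.Icc 1 k ∧ c e ≠ 0} ∧ I.ncard ≤ 2 ∧ Set.InjOn c I

lemma IndC_finite {k : ℕ} {c : ℕ → ℕ} {I : Set ℕ} (h : IndC k c I) : I.Finite :=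
  (Set.finite_Icc 1 k).subset (fun x hx => (h.1 hx).1)

lemma IndC_subset {k : ℕ} {c : ℕ → ℕ} ⦃I J : Set ℕ⦄ (hJ : IndC k c J) (hIJ : I ⊆ J) :
    IndC k c I :=
  ⟨hIJ.trans hJ.1, (Set.ncard_le_ncard hIJ (IndC_finite hJ)).trans hJ.2.1, hJ.2.2.mono hIJ⟩

lemma IndC_pair_of {k : ℕ} {c : ℕ → ℕ} {w x : ℕ}
    (hw : w ∈ Set.Icc 1 k ∧ c w ≠ 0) (hx : x ∈ Set.Icc 1 k ∧ c x ≠ 0)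
    (hcwx : c w ≠ c x) : IndC k c {w, x} := by
  have hwx : w ≠ x := fun h => hcwx (by rw [h])
  refine ⟨?_, ?_, ?_⟩
  · rintro u (rfl | rfl)
    · exact hw
    · exact hx
  · rw [Set.ncard_pair hwx]
  · rintro u (rfl | rfl) v (rfl | rfl) huv
    · rfl
    · exact absurd huv hcwx
    · exact absurd huv.symm hcwx
    · rfl

lemma IndC_aug {k : ℕ} {c : ℕ → ℕ} ⦃I J : Set ℕ⦄ (hI : IndC k c I) (hJ : IndC k c J)
    (hlt : I.ncard < J.ncard) : ∃ e ∈ J, e ∉ I ∧ IndC k c (insert e I) := by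
  have hIfin := IndC_finite hI
  have hJfin := IndC_finite hJ
  rcases Nat.lt_or_ge I.ncard 1 with h0 | h1
  · have hIe : I = ∅ := Set.ncard_eq_zero hIfin |>.1 (by omega)
    subst hIe
    obtain ⟨e, he⟩ := Set.nonempty_of_ncard_ne_zero (by omega : J.ncard ≠ 0)
    refine ⟨e, he, by simp, ?_⟩
    have hie : insert e (∅ : Set ℕ) = {e} := by simp
    rw [hie]
    refine ⟨by rintro u rfl; exact hJ.1 he, by simp, ?_⟩
    rintro u rfl v rfl _
    rfl
  · have hI1 : I.ncard = 1 := by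
      have := hJ.2.1
      omega
    obtain ⟨x, rfl⟩ := Set.ncard_eq_one.1 hI1
    have hJ2 : J.ncard = 2 := by
      have := hJ.2.1
      omega
    obtain ⟨y, z, hyz, rfl⟩ := Set.ncard_eq_two.1 hJ2
    have hy : y ∈ ({y, z} : Set ℕ) := by simp
    have hz : z ∈ ({y, z} : Set ℕ) := by simp
    have hcyz : c y ≠ c z := fun h => hyz (hJ.2.2 hy hz h)
    have hxmem := hI.1 (by simp : x ∈ ({x} : Set ℕ))
    by_cases hcy : c y = c x
    · have hcz : c z ≠ c x := by rw [← hcy]; exact fun h => hcyz h.symm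
      have hzx : z ≠ x := fun h => hcz (by rw [h])
      refine ⟨z, hz, by simpa using hzx, ?_⟩
      have : insert z ({x} : Set ℕ) = {z, x} := rfl
      rw [this]
      exact IndC_pair_of (hJ.1 hz) hxmem hcz
    · have hyx : y ≠ x := fun h => hcy (by rw [h])
      refine ⟨y, hy, by simpa using hyx, ?_⟩
      have : insert y ({x} : Set ℕ) = {y, x} := rfl
      rw [this]
      exact IndC_pair_of (hJ.1 hy) hxmem hcy

/-- the rank-2 matroid associated to a coloring `c` of `{1, …, k}` -/
noncomputable def cMatroid (k : ℕ) (c : ℕ → ℕ) : Matroid ℕ :=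
  (IndepMatroid.ofFinite (Set.finite_Icc 1 k) (IndC k c)
    ⟨by simp, by simp, by simp [Set.InjOn]⟩
    IndC_subset
    (by
      intro I J hI hJ hlt
      exact IndC_aug hI hJ hlt)
    (fun I hI => fun x hx => (hI.1 hx).1)).matroid

lemma cMatroid_E (k : ℕ) (c : ℕ → ℕ) : (cMatroid k c).E = Set.Icc 1 k := rfl

lemma cMatroid_indep {k : ℕ} {c : ℕ → ℕ} {I : Set ℕ} :
    (cMatroid k c).Indep I ↔ IndC k c I := by
  exact Iff.rfl

lemma cMatroid_indep_singleton {k : ℕ} {c : ℕ → ℕ} {e : ℕ} :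
    (cMatroid k c).Indep {e} ↔ e ∈ Set.Icc 1 k ∧ c e ≠ 0 := by
  rw [cMatroid_indep]
  constructor
  · intro h
    exact h.1 (by simp)
  · intro h
    refine ⟨by rintro u rfl; exact h, by simp, ?_⟩
    rintro u rfl v rfl _
    rfl

lemma cMatroid_indep_pair {k : ℕ} {c : ℕ → ℕ} {e f : ℕ} (hne : e ≠ f) :
    (cMatroid k c).Indep {e, f} ↔
      (e ∈ Set.Icc 1 k ∧ c e ≠ 0) ∧ (f ∈ Set.Icc 1 k ∧ c f ≠ 0) ∧ c e ≠ c f := by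
  rw [cMatroid_indep]
  constructor
  · intro h
    refine ⟨h.1 (by simp), h.1 (by simp), ?_⟩
    intro hcon
    exact hne (h.2.2 (by simp) (by simp) hcon)
  · rintro ⟨he, hf, hcef⟩
    exact IndC_pair_of he hf hcef

lemma cMatroid_rank2 {k : ℕ} {c : ℕ → ℕ}
    (hyp : ∃ e f, e ≠ f ∧ (e ∈ Set.Icc 1 k ∧ c e ≠ 0) ∧ (f ∈ Set.Icc 1 k ∧ c f ≠ 0) ∧
      c e ≠ c f) :
    cMatroid k c ∈ rank2On k := by
  obtain ⟨e, f, hef, he, hf, hcef⟩ := hyp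
  refine ⟨rfl, ?_⟩
  intro B hB
  have hBI := hB.indep
  have hBind := cMatroid_indep.1 hBI
  have hle2 := hBind.2.1
  have hBfin := IndC_finite hBind
  rcases Nat.lt_or_ge B.ncard 2 with hlt | hge
  · exfalso
    rcases Nat.lt_or_ge B.ncard 1 with h0 | h1
    · have hBe : B = ∅ := (Set.ncard_eq_zero hBfin).1 (by omega)
      subst hBe
      have hi : (cMatroid k c).Indep {e} := cMatroid_indep_singleton.2 he
      have := hB.eq_of_subset_indep hi (Set.empty_subset _)
      exact absurd this.symm (Set.singleton_ne_empty e)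
    · have hB1 : B.ncard = 1 := by omega
      obtain ⟨x, rfl⟩ := Set.ncard_eq_one.1 hB1
      have hxmem := hBind.1 (by simp : x ∈ ({x} : Set ℕ))
      by_cases hcy : c e = c x
      · have hcz : c f ≠ c x := by rw [← hcy]; exact fun h => hcef h.symm
        have hi : (cMatroid k c).Indep {f, x} :=
          cMatroid_indep.2 (IndC_pair_of hf hxmem hcz)
        have hsub : ({x} : Set ℕ) ⊆ {f, x} := by simp
        have heq := hB.eq_of_subset_indep hi hsub
        have : f ∈ ({x} : Set ℕ) := by rw [heq]; simp
        rcases this with rfl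
        exact hcz rfl
      · have hi : (cMatroid k c).Indep {e, x} :=
          cMatroid_indep.2 (IndC_pair_of he hxmem hcy)
        have hsub : ({x} : Set ℕ) ⊆ {e, x} := by simp
        have heq := hB.eq_of_subset_indep hi hsub
        have : e ∈ ({x} : Set ℕ) := by rw [heq]; simp
        rcases this with rfl
        exact hcy rfl
  · omega

-- ===== realizability =====

lemma exists_realization {k : ℕ} {μ : Multiset ℕ} (hμ : μ ∈ Invs k) :
    ∃ M ∈ rank2On k, invM k M = μ := by
  obtain ⟨hpos, hcard, hsum⟩ := hμ
  set L := μ.toList with hLdef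
  have hLpos : ∀ x ∈ L, 0 < x := fun x hx => hpos x (by rwa [← Multiset.mem_toList])
  have hLsum : L.sum = μ.sum := Multiset.sum_toList μ
  have hLlen : L.length = Multiset.card μ := Multiset.length_toList μ
  have hcoe : (L : Multiset ℕ) = μ := Multiset.coe_toList μ
  match hLmatch : L with
  | [] => simp at hLlen; omega
  | [a] => simp at hLlen; omega
  | a :: b :: T =>
    have ha : 0 < a := hLpos a (by simp)
    have hb : 0 < b := hLpos b (by simp)
    have hsL : (a :: b :: T).sum = a + (b + T.sum) := by simp
    have hsk : (a :: b :: T).sum ≤ k := by rw [hLsum]; exact hsum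
    set c := colOf (a :: b :: T) with hcdef
    have hcol1 : c 1 = 1 := colOf_cons_le le_rfl (by omega)
    have hcola : c (a + 1) = 2 := by
      rw [hcdef, colOf_cons_gt (by omega)]
      have h1 : a + 1 - a = 1 := by omega
      rw [h1, colOf_cons_le le_rfl (by omega)]
      norm_num
    have h1k : (1 : ℕ) ∈ Set.Icc 1 k := by
      rw [Set.mem_Icc]
      constructor
      · rfl
      · omega
    have hak : a + 1 ∈ Set.Icc 1 k := by
      rw [Set.mem_Icc]
      constructor
      · omega
      · omega
    have hM : cMatroid k c ∈ rank2On k := by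
      refine cMatroid_rank2 ⟨1, a + 1, by omega, ⟨h1k, by omega⟩, ⟨hak, by omega⟩, by omega⟩
    refine ⟨cMatroid k c, hM, ?_⟩
    have hnl : nlF k (cMatroid k c) = Finset.Icc 1 ((a :: b :: T).sum) := by
      ext e
      rw [nlF, Finset.mem_filter, Finset.mem_Icc, Finset.mem_Icc]
      constructor
      · rintro ⟨⟨he1, he2⟩, hind⟩
        obtain ⟨-, hc0⟩ := cMatroid_indep_singleton.1 hind
        refine ⟨he1, ?_⟩
        by_contra hgt
        push_neg at hgt
        exact hc0 (colOf_gt _ _ hgt)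
      · rintro ⟨he1, he2⟩
        refine ⟨⟨he1, by omega⟩, cMatroid_indep_singleton.2 ⟨?_, ?_⟩⟩
        · rw [Set.mem_Icc]; omega
        · exact colOf_ne_zero _ hLpos e he1 he2
    rw [invM, hnl]
    have heq : fsizes (Finset.Icc 1 ((a :: b :: T).sum))
          (fun e => (cMatroid k c).closure {e}) =
        fsizes (Finset.Icc 1 ((a :: b :: T).sum)) c := by
      refine fsizes_eq_of_bijOn _ _ id (Set.bijOn_id _) ?_
      intro x hx y hy
      rw [Finset.mem_Icc] at hx hy
      have hxE : x ∈ (cMatroid k c).E := by rw [cMatroid_E, Set.mem_Icc]; omega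
      have hyE : y ∈ (cMatroid k c).E := by rw [cMatroid_E, Set.mem_Icc]; omega
      have hxi : (cMatroid k c).Indep {x} := cMatroid_indep_singleton.2
        ⟨by rw [Set.mem_Icc]; omega, colOf_ne_zero _ hLpos x (by omega) (by omega)⟩
      have hyi : (cMatroid k c).Indep {y} := cMatroid_indep_singleton.2
        ⟨by rw [Set.mem_Icc]; omega, colOf_ne_zero _ hLpos y (by omega) (by omega)⟩
      rcases eq_or_ne x y with rfl | hne
      · simp
      · have h1 := indep_pair_iff hne hxE hyE hxi hyi
        have h2 := cMatroid_indep_pair (k := k) (c := c) hne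
        simp only [id]
        constructor
        · intro hcc
          by_contra hcon
          have hind : (cMatroid k c).Indep {x, y} := h2.2
            ⟨⟨by rw [Set.mem_Icc]; omega, colOf_ne_zero _ hLpos x (by omega) (by omega)⟩,
             ⟨by rw [Set.mem_Icc]; omega, colOf_ne_zero _ hLpos y (by omega) (by omega)⟩, hcon⟩
          exact (h1.1 hind) hcc
        · intro hcc
          by_contra hcon
          have hind := h1.2 hcon
          exact (h2.1 hind).2.2 hcc
    rw [heq, hcdef, fsizes_colOf _ hLpos, hcoe]

-- ===== counting isomorphism classes =====

lemma numIso_eq_Nc {k : ℕ} (hk : 2 ≤ k) : numIsoClasses (rank2On k) = Nc k := by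
  have hclass : {C : Set (Matroid ℕ) | ∃ M ∈ rank2On k, C = {N ∈ rank2On k | MatroidIso M N}} =
      (fun μ => {N ∈ rank2On k | invM k N = μ}) '' (Invs k) := by
    ext C
    simp only [Set.mem_setOf_eq, Set.mem_image]
    constructor
    · rintro ⟨M, hMS, rfl⟩
      refine ⟨invM k M, invM_mem_Invs hMS, ?_⟩
      ext N
      simp only [Set.mem_setOf_eq]
      constructor
      · rintro ⟨hNS, hinv⟩
        exact ⟨hNS, ((iso_iff_invM hMS hNS).2 hinv.symm : MatroidIso M N)⟩
      · rintro ⟨hNS, hiso⟩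
        exact ⟨hNS, ((iso_iff_invM hMS hNS).1 hiso).symm⟩
    · rintro ⟨μ, hμ, rfl⟩
      obtain ⟨M, hMS, hMinv⟩ := exists_realization hμ
      refine ⟨M, hMS, ?_⟩
      ext N
      simp only [Set.mem_setOf_eq]
      constructor
      · rintro ⟨hNS, hinv⟩
        exact ⟨hNS, (iso_iff_invM hMS hNS).2 (by rw [hMinv, hinv])⟩
      · rintro ⟨hNS, hiso⟩
        exact ⟨hNS, by rw [← ((iso_iff_invM hMS hNS).1 hiso), hMinv]⟩
  have hinj : Set.InjOn (fun μ => {N ∈ rank2On k | invM k N = μ}) (Invs k) := by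
    intro μ₁ h₁ μ₂ h₂ heq
    obtain ⟨M, hMS, hMinv⟩ := exists_realization h₁
    simp only [Set.ext_iff, Set.mem_setOf_eq] at heq
    have hm := (heq M).1 ⟨hMS, hMinv⟩
    rw [← hMinv, hm.2]
  rw [numIsoClasses, hclass, Set.ncard_image_of_injOn hinj]
  rfl

end Aux7

/-- for `n ≥ 4`, the number `m(n)` of isomorphism classes of rank-2
matroids on an `n`-element ground set satisfies `m(n) = 2·m(n−1) − m(n−2) + ρ(n)`
(stated additively as `m(n) + m(n−2) = 2·m(n−1) + ρ(n)`). -/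
theorem statement_7 (n : ℕ) (hn : 4 ≤ n) :
    numIsoClasses (rank2On n) + numIsoClasses (rank2On (n - 2)) =
      2 * numIsoClasses (rank2On (n - 1)) + rho n := by
  rw [numIso_eq_Nc (by omega : 2 ≤ n), numIso_eq_Nc (by omega : 2 ≤ n - 2),
    numIso_eq_Nc (by omega : 2 ≤ n - 1)]
  have h1 := Nc_succ (k := n) (by omega)
  have h2 := Nc_succ (k := n - 1) (by omega)
  have h3 := tcount_succ (n := n) (by omega)
  have e1 : n - 1 - 1 = n - 2 := by omega
  rw [e1] at h2
  omega

end PaperPOAM
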